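/- In the Neyman–Scott model with Jeffreys' prior π_J(θ₁,…,θ_n, σ²) ∝ (σ²)^{-n/2 − 1}, the marginal posterior of σ² is proportional to (σ²)^{-nk/2 − 1} exp[−n(k−1)S/(2σ²)], whose mean n(k−1)S/(nk−2) converges in probability to (k−1)σ²/k as n → ∞; hence the posterior mean under Jeffreys' prior is an inconsistent estimator of σ². -/

import Mathlib

set_option maxHeartbeats 1000000

open MeasureTheory ProbabilityTheory Filter Real Topology

lemma my_integrable_sq_mul_exp {b : ℝ} (hb : 0 < b) :
    Integrable fun x : ℝ => x ^ 2 * Real.exp (-b * x ^ 2) := by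
  have h := integrable_rpow_mul_exp_neg_mul_sq hb (s := 2) (by norm_num)
  have : (fun x : ℝ => x ^ (2 : ℝ) * Real.exp (-b * x ^ 2))
      = fun x : ℝ => x ^ 2 * Real.exp (-b * x ^ 2) := by
    funext x
    rw [Real.rpow_two]
  rwa [this] at h

lemma my_exp_tendsto {b : ℝ} (hb : 0 < b) (l : Filter ℝ)
    (hl : Tendsto (fun x : ℝ => x ^ 2) l atTop) :
    Tendsto (fun x : ℝ => Real.exp (-b * x ^ 2)) l (nhds 0) := by
  apply Real.tendsto_exp_atBot.comp
  exact Tendsto.const_mul_atTop_of_neg (neg_neg_iff_pos.mpr hb) hl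

lemma my_integral_mul_exp {b : ℝ} (hb : 0 < b) :
    ∫ x : ℝ, x * Real.exp (-b * x ^ 2) = 0 := by
  have hderiv : ∀ x : ℝ, HasDerivAt (fun y : ℝ => -(2 * b)⁻¹ * Real.exp (-b * y ^ 2))
      (x * Real.exp (-b * x ^ 2)) x := by
    intro x
    have h1 : HasDerivAt (fun y : ℝ => -b * y ^ 2) (-b * (2 * x)) x := by
      simpa using ((hasDerivAt_pow 2 x).const_mul (-b))
    have h2 := (h1.exp).const_mul (-(2 * b)⁻¹)
    refine h2.congr_deriv ?_
    field_simp [hb.ne']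
  have hsq_top : Tendsto (fun x : ℝ => x ^ 2) atTop atTop :=
    tendsto_pow_atTop two_ne_zero
  have hsq_bot : Tendsto (fun x : ℝ => x ^ 2) atBot atTop := by
    have h1 : Tendsto (fun x : ℝ => -x) atBot atTop := tendsto_neg_atBot_atTop
    have := (tendsto_pow_atTop (n := 2) two_ne_zero).comp h1
    simpa [Function.comp_def] using this
  have htop : Tendsto (fun y : ℝ => -(2 * b)⁻¹ * Real.exp (-b * y ^ 2)) atTop (nhds 0) := by
    simpa using ((my_exp_tendsto hb atTop hsq_top).const_mul (-(2 * b)⁻¹))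
  have hbot : Tendsto (fun y : ℝ => -(2 * b)⁻¹ * Real.exp (-b * y ^ 2)) atBot (nhds 0) := by
    simpa using ((my_exp_tendsto hb atBot hsq_bot).const_mul (-(2 * b)⁻¹))
  have := integral_of_hasDerivAt_of_tendsto hderiv (integrable_mul_exp_neg_mul_sq hb) hbot htop
  simpa using this

lemma my_integral_sq_mul_exp {b : ℝ} (hb : 0 < b) :
    ∫ x : ℝ, x ^ 2 * Real.exp (-b * x ^ 2) = (2 * b)⁻¹ * Real.sqrt (π / b) := by
  have hu : ∀ x : ℝ, HasDerivAt (fun y : ℝ => y) (1 : ℝ) x := fun x => hasDerivAt_id x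
  have hv : ∀ x : ℝ, HasDerivAt (fun y : ℝ => -(2 * b)⁻¹ * Real.exp (-b * y ^ 2))
      (x * Real.exp (-b * x ^ 2)) x := by
    intro x
    have h1 : HasDerivAt (fun y : ℝ => -b * y ^ 2) (-b * (2 * x)) x := by
      simpa using ((hasDerivAt_pow 2 x).const_mul (-b))
    have h2 := (h1.exp).const_mul (-(2 * b)⁻¹)
    refine h2.congr_deriv ?_
    field_simp [hb.ne']
  have huv' : Integrable ((fun y : ℝ => y) * fun x : ℝ => x * Real.exp (-b * x ^ 2)) := by
    have := my_integrable_sq_mul_exp hb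
    apply this.congr
    filter_upwards with x
    simp [Pi.mul_apply]
    ring
  have hu'v : Integrable ((fun _ : ℝ => (1:ℝ)) * fun y : ℝ => -(2 * b)⁻¹ * Real.exp (-b * y ^ 2)) := by
    have := (integrable_exp_neg_mul_sq hb).const_mul (-(2 * b)⁻¹)
    apply this.congr
    filter_upwards with x
    simp [Pi.mul_apply]
  have huv : Integrable ((fun y : ℝ => y) * fun y : ℝ => -(2 * b)⁻¹ * Real.exp (-b * y ^ 2)) := by
    have := (integrable_mul_exp_neg_mul_sq hb).const_mul (-(2 * b)⁻¹)
    apply this.congr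
    filter_upwards with x
    simp [Pi.mul_apply]
    ring
  have h := integral_mul_deriv_eq_deriv_mul_of_integrable (fun x _ => hu x) (fun x _ => hv x) huv' hu'v huv
  have h2 : ∫ x : ℝ, x * (x * Real.exp (-b * x ^ 2)) = ∫ x : ℝ, x ^ 2 * Real.exp (-b * x ^ 2) := by
    congr 1; funext x; ring
  rw [h2] at h
  rw [h]
  have : ∫ x : ℝ, (1 : ℝ) * (-(2 * b)⁻¹ * Real.exp (-b * x ^ 2))
      = -(2 * b)⁻¹ * ∫ x : ℝ, Real.exp (-b * x ^ 2) := by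
    simp_rw [one_mul]
    exact integral_const_mul _ _
  rw [this, integral_gaussian]
  ring

lemma my_pdf_nn (v : NNReal) :
    gaussianPDF 0 v = fun x => ((gaussianPDFReal 0 v x).toNNReal : ENNReal) := by
  funext x
  rw [gaussianPDF_def]
  rfl

lemma my_integral_gauss (v : NNReal) (hv : v ≠ 0) (g : ℝ → ℝ) :
    ∫ x, g x ∂(gaussianReal 0 v) = ∫ x, gaussianPDFReal 0 v x * g x := by
  rw [gaussianReal_of_var_ne_zero 0 hv, my_pdf_nn,
    integral_withDensity_eq_integral_smul ((measurable_gaussianPDFReal 0 v).real_toNNReal) g]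
  congr 1
  funext x
  rw [NNReal.smul_def, Real.coe_toNNReal _ (gaussianPDFReal_nonneg 0 v x)]
  rfl

lemma my_pdf_form (v : NNReal) (hv : 0 < (v:ℝ)) (x : ℝ) :
    gaussianPDFReal 0 v x = (Real.sqrt (2 * π * v))⁻¹ * Real.exp (-(2 * (v:ℝ))⁻¹ * x ^ 2) := by
  rw [gaussianPDFReal_def]
  simp only [sub_zero]
  congr 1
  rw [neg_div, neg_mul]
  congr 1
  field_simp

lemma my_gauss_mean (v : NNReal) (hv : 0 < (v:ℝ)) :
    ∫ x, x ∂(gaussianReal 0 v) = 0 := by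
  have hvne : v ≠ 0 := fun h => by simp [h] at hv
  rw [my_integral_gauss v hvne]
  have : ∀ x : ℝ, gaussianPDFReal 0 v x * x
      = (Real.sqrt (2 * π * v))⁻¹ * (x * Real.exp (-(2 * (v:ℝ))⁻¹ * x ^ 2)) := by
    intro x; rw [my_pdf_form v hv]; ring
  simp_rw [this]
  rw [integral_const_mul, my_integral_mul_exp (by positivity), mul_zero]

lemma my_gauss_sq (v : NNReal) (hv : 0 < (v:ℝ)) :
    ∫ x, x ^ 2 ∂(gaussianReal 0 v) = v := by
  have hvne : v ≠ 0 := fun h => by simp [h] at hv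
  rw [my_integral_gauss v hvne]
  have : ∀ x : ℝ, gaussianPDFReal 0 v x * x ^ 2
      = (Real.sqrt (2 * π * v))⁻¹ * (x ^ 2 * Real.exp (-(2 * (v:ℝ))⁻¹ * x ^ 2)) := by
    intro x; rw [my_pdf_form v hv]; ring
  simp_rw [this]
  rw [integral_const_mul, my_integral_sq_mul_exp (by positivity)]
  have h1 : (2 * (2 * (v:ℝ))⁻¹)⁻¹ = v := by field_simp
  have h2 : π / (2 * (v:ℝ))⁻¹ = 2 * π * v := by field_simp
  rw [h1, h2]
  have h3 : Real.sqrt (2*π*(v:ℝ)) ≠ 0 := by positivity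
  field_simp

lemma my_gauss_integrable_sq (v : NNReal) (hv : 0 < (v:ℝ)) :
    Integrable (fun x : ℝ => x ^ 2) (gaussianReal 0 v) := by
  have hvne : v ≠ 0 := fun h => by simp [h] at hv
  rw [gaussianReal_of_var_ne_zero 0 hvne]
  rw [integrable_withDensity_iff (measurable_gaussianPDF 0 v)
    (Filter.Eventually.of_forall fun x => ENNReal.ofReal_lt_top)]
  have : ∀ x : ℝ, x ^ 2 * (gaussianPDF 0 v x).toReal
      = (Real.sqrt (2 * π * v))⁻¹ * (x ^ 2 * Real.exp (-(2 * (v:ℝ))⁻¹ * x ^ 2)) := by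
    intro x
    rw [gaussianPDF_def, ENNReal.toReal_ofReal (gaussianPDFReal_nonneg 0 v x), my_pdf_form v hv]
    ring
  simp_rw [this]
  exact (my_integrable_sq_mul_exp (by positivity)).const_mul _

lemma my_sum_sq_decomp (k : ℕ) (hk : 0 < k) (a : Fin k → ℝ) (t : ℝ) :
    ∑ j, (a j - t) ^ 2
      = (∑ j, (a j - (∑ j', a j') / k) ^ 2) + k * (t - (∑ j', a j') / k) ^ 2 := by
  set m : ℝ := (∑ j', a j') / k with hm
  have hks : (k : ℝ) ≠ 0 := Nat.cast_ne_zero.mpr hk.ne'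
  have h0 : ∑ j, (a j - m) = 0 := by
    rw [Finset.sum_sub_distrib, Finset.sum_const, Finset.card_univ, Fintype.card_fin, nsmul_eq_mul, hm]
    field_simp
    ring
  have : ∀ j : Fin k, (a j - t) ^ 2
      = (a j - m) ^ 2 + 2 * (m - t) * (a j - m) + (m - t) ^ 2 := by
    intro j; ring
  rw [Finset.sum_congr rfl fun j _ => this j]
  rw [Finset.sum_add_distrib, Finset.sum_add_distrib, ← Finset.mul_sum, h0,
    Finset.sum_const, Finset.card_univ, Fintype.card_fin]
  simp only [nsmul_eq_mul, mul_zero, add_zero]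
  ring

lemma my_gauss_step (k : ℕ) (hk : 0 < k) (v : ℝ) (hv : 0 < v) (a : Fin k → ℝ) :
    ∫ t : ℝ, ∏ j, (2 * π * v) ^ (-(1 / 2 : ℝ)) * Real.exp (-(a j - t) ^ 2 / (2 * v))
      = (2 * π * v) ^ (-((k : ℝ) / 2)) * (2 * π * v / k) ^ ((1 : ℝ) / 2) *
        Real.exp (-(∑ j, (a j - (∑ j', a j') / k) ^ 2) / (2 * v)) := by
  have h2pv : (0:ℝ) < 2 * π * v := by positivity
  set m : ℝ := (∑ j', a j') / k with hm
  set SS : ℝ := ∑ j, (a j - m) ^ 2 with hSS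
  have hintegrand : ∀ t : ℝ,
      (∏ j, (2 * π * v) ^ (-(1 / 2 : ℝ)) * Real.exp (-(a j - t) ^ 2 / (2 * v)))
      = ((2 * π * v) ^ (-((k:ℝ)/2)) * Real.exp (-SS / (2 * v)))
          * Real.exp (-((k:ℝ)/(2*v)) * (t - m) ^ 2) := by
    intro t
    rw [Finset.prod_mul_distrib, Finset.prod_const, Finset.card_univ, Fintype.card_fin,
      ← Real.exp_sum]
    have e1 : ((2 * π * v) ^ (-(1 / 2 : ℝ))) ^ k = (2 * π * v) ^ (-((k:ℝ)/2)) := by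
      rw [← Real.rpow_natCast ((2 * π * v) ^ (-(1 / 2 : ℝ))) k, ← Real.rpow_mul h2pv.le]
      congr 1; ring
    have e2 : ∑ j, -(a j - t) ^ 2 / (2 * v) = -SS / (2 * v) + -((k:ℝ)/(2*v)) * (t - m) ^ 2 := by
      rw [← Finset.sum_div]
      rw [show (∑ j, -(a j - t) ^ 2) = -(∑ j, (a j - t) ^ 2) by rw [← Finset.sum_neg_distrib]]
      rw [my_sum_sq_decomp k hk a t]
      rw [hSS, hm]
      ring
    rw [e1, e2, Real.exp_add]
    ring
  rw [MeasureTheory.integral_congr_ae (Filter.Eventually.of_forall hintegrand)]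
  rw [MeasureTheory.integral_const_mul]
  have hsub : ∫ t : ℝ, Real.exp (-((k:ℝ)/(2*v)) * (t - m) ^ 2)
      = ∫ t : ℝ, Real.exp (-((k:ℝ)/(2*v)) * t ^ 2) :=
    MeasureTheory.integral_sub_right_eq_self (fun t => Real.exp (-((k:ℝ)/(2*v)) * t ^ 2)) m
  rw [hsub, integral_gaussian]
  have : π / ((k:ℝ)/(2*v)) = 2 * π * v / k := by
    field_simp
  rw [this, Real.sqrt_eq_rpow]
  ring

lemma my_part1 (k n : ℕ) (hk : 0 < k) (hn : 0 < n) :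
    ∃ c : ℝ, 0 < c ∧
      ∀ (x : Fin n → Fin k → ℝ) (v : ℝ), 0 < v →
        (∫ t : Fin n → ℝ, ∏ i, ∏ j,
            (2 * π * v) ^ (-(1 / 2 : ℝ)) * Real.exp (-(x i j - t i) ^ 2 / (2 * v)))
          * v ^ (-((n : ℝ) / 2) - 1)
        = c * v ^ (-((n : ℝ) * k / 2) - 1) *
            Real.exp (-(∑ i, ∑ j, (x i j - (∑ j' : Fin k, x i j') / k) ^ 2) / (2 * v)) := by
  have hπ : (0:ℝ) < 2 * π := by positivity
  have hπk : (0:ℝ) < 2 * π / k := by positivity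
  refine ⟨(2*π) ^ (-((n:ℝ) * k / 2)) * (2*π/(k:ℝ)) ^ ((n:ℝ)/2), by positivity, ?_⟩
  intro x v hv
  have h2pv : (0:ℝ) < 2 * π * v := by positivity
  rw [MeasureTheory.volume_pi, MeasureTheory.integral_fintype_prod_eq_prod
    (f := fun i s => ∏ j, (2 * π * v) ^ (-(1 / 2 : ℝ)) * Real.exp (-(x i j - s) ^ 2 / (2 * v)))]
  rw [Finset.prod_congr rfl (fun i _ => my_gauss_step k hk v hv (x i))]
  rw [Finset.prod_mul_distrib, Finset.prod_mul_distrib, Finset.prod_const, Finset.prod_const,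
    ← Real.exp_sum, Finset.card_univ, Fintype.card_fin]
  have eexp : ∑ i, -(∑ j, (x i j - (∑ j' : Fin k, x i j') / k) ^ 2) / (2 * v)
      = -(∑ i, ∑ j, (x i j - (∑ j' : Fin k, x i j') / k) ^ 2) / (2 * v) := by
    rw [← Finset.sum_div, ← Finset.sum_neg_distrib]
  rw [eexp]
  have e1 : ((2 * π * v) ^ (-((k:ℝ)/2))) ^ n
      = (2*π) ^ (-((n:ℝ) * k / 2)) * v ^ (-((n:ℝ) * k / 2)) := by
    rw [← Real.rpow_natCast ((2 * π * v) ^ (-((k:ℝ)/2))) n, ← Real.rpow_mul h2pv.le,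
      show (-((k:ℝ)/2)) * n = -((n:ℝ) * k / 2) by ring,
      Real.mul_rpow hπ.le hv.le]
  have e2 : ((2 * π * v / k) ^ ((1:ℝ)/2)) ^ n
      = (2*π/(k:ℝ)) ^ ((n:ℝ)/2) * v ^ ((n:ℝ)/2) := by
    rw [show (2 * π * v / (k:ℝ)) = (2*π/(k:ℝ)) * v by ring,
      ← Real.rpow_natCast ((2*π/(k:ℝ) * v) ^ ((1:ℝ)/2)) n,
      ← Real.rpow_mul (by positivity : (0:ℝ) ≤ 2*π/(k:ℝ)*v),
      show ((1:ℝ)/2) * n = (n:ℝ)/2 by ring,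
      Real.mul_rpow hπk.le hv.le]
  rw [e1, e2]
  have hvpow : v ^ (-((n:ℝ) * k / 2)) * (v ^ ((n:ℝ)/2) * v ^ (-((n:ℝ)/2) - 1))
      = v ^ (-((n:ℝ) * k / 2) - 1) := by
    rw [← Real.rpow_add hv, ← Real.rpow_add hv]
    congr 1
    ring
  linear_combination ((2*π) ^ (-((n:ℝ) * k / 2)) * (2*π/(k:ℝ)) ^ ((n:ℝ)/2) *
    Real.exp (-(∑ i, ∑ j, (x i j - (∑ j' : Fin k, x i j') / k) ^ 2) / (2 * v))) * hvpow

lemma my_iIndepFun_comp_inj {ι ι' Ω : Type*} [MeasurableSpace Ω] {μ : Measure Ω}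
    {β : Type*} [mβ : MeasurableSpace β] {f : ι → Ω → β}
    (h : iIndepFun (m := fun _ => mβ) f μ) {g : ι' → ι} (hg : Function.Injective g) :
    iIndepFun (m := fun _ => mβ) (fun j => f (g j)) μ := by
  classical
  rw [iIndepFun_iff_measure_inter_preimage_eq_mul] at h ⊢
  intro S sets hsets
  have key := h ((S.map ⟨g, hg⟩))
    (sets := Function.extend g sets (fun _ => Set.univ)) ?_
  · have h1 : (⋂ i ∈ S.map ⟨g, hg⟩, f i ⁻¹' (Function.extend g sets (fun _ => Set.univ) i))
        = ⋂ j ∈ S, f (g j) ⁻¹' sets j := by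
      ext ω
      simp only [Set.mem_iInter, Finset.mem_map, Function.Embedding.coeFn_mk]
      constructor
      · intro hω j hj
        have := hω (g j) ⟨j, hj, rfl⟩
        rwa [hg.extend_apply] at this
      · rintro hω i ⟨j, hj, rfl⟩
        rw [hg.extend_apply]
        exact hω j hj
    have h2 : ∏ i ∈ S.map ⟨g, hg⟩, μ (f i ⁻¹' (Function.extend g sets (fun _ => Set.univ) i))
        = ∏ j ∈ S, μ (f (g j) ⁻¹' sets j) := by
      rw [Finset.prod_map]
      exact Finset.prod_congr rfl fun j _ => by rw [Function.Embedding.coeFn_mk, hg.extend_apply]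
    rw [h1, h2] at key
    exact key
  · intro i hi
    rcases Finset.mem_map.1 hi with ⟨j, hj, rfl⟩
    show MeasurableSet (Function.extend g sets (fun _ => Set.univ) (g j))
    rw [hg.extend_apply]
    exact hsets j hj

lemma my_map_pi {Ω : Type*} [MeasureSpace Ω] [IsProbabilityMeasure (ℙ : Measure Ω)]
    {k : ℕ} (f : Fin k → Ω → ℝ) (hm : ∀ j, Measurable (f j))
    (hind : iIndepFun (m := fun _ => (inferInstance : MeasurableSpace ℝ)) f ℙ) :
    Measure.map (fun ω j => f j ω) ℙ = Measure.pi (fun j => Measure.map (f j) ℙ) := by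
  haveI : ∀ j, IsProbabilityMeasure (Measure.map (f j) ℙ) :=
    fun j => Measure.isProbabilityMeasure_map (hm j).aemeasurable
  refine (Measure.pi_eq fun s hs => ?_).symm
  rw [Measure.map_apply (measurable_pi_lambda _ hm) (MeasurableSet.univ_pi hs)]
  have hpre : (fun ω j => f j ω) ⁻¹' Set.univ.pi s = ⋂ j ∈ Finset.univ, f j ⁻¹' s j := by
    ext ω
    simp [Set.mem_pi]
  rw [hpre, hind.measure_inter_preimage_eq_mul Finset.univ (fun j _ => hs j)]
  exact Finset.prod_congr rfl fun j _ => (Measure.map_apply (hm j) (hs j)).symm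

theorem my_part2
    {Ω : Type*} [MeasureSpace Ω] [IsProbabilityMeasure (ℙ : Measure Ω)]
    (k : ℕ) (hk : 2 ≤ k) (θ : ℕ → ℝ) (σ2 : NNReal) (hσ2 : 0 < σ2)
    (X : ℕ → Fin k → Ω → ℝ)
    (hmeas : ∀ i j, Measurable (X i j))
    (hindep : iIndepFun (m := fun _ : ℕ × Fin k => (inferInstance : MeasurableSpace ℝ))
      (fun p ω => X p.1 p.2 ω) ℙ)
    (hdist : ∀ i j, Measure.map (X i j) ℙ = gaussianReal (θ i) σ2) :
    TendstoInMeasure ℙ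
      (fun n ω =>
        (∑ i ∈ Finset.range n, ∑ j : Fin k,
            (X i j ω - (∑ j' : Fin k, X i j' ω) / k) ^ 2) / (n * k - 2))
      atTop (fun _ => ((k : ℝ) - 1) / k * σ2) := by
  classical
  have hk0 : 0 < k := by omega
  have hkR : (0:ℝ) < k := by exact_mod_cast hk0
  have hkne : (k:ℝ) ≠ 0 := hkR.ne'
  have hσR : (0:ℝ) < σ2 := hσ2
  set Z : ℕ → Fin k → Ω → ℝ := fun i j ω => X i j ω - θ i with hZ
  set Y : ℕ → Ω → ℝ := fun i ω => ∑ j, (X i j ω - (∑ j' : Fin k, X i j' ω) / k) ^ 2 with hY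
  have hZmeas : ∀ i j, Measurable (Z i j) := fun i j => (hmeas i j).sub measurable_const
  have hZdist : ∀ i j, Measure.map (Z i j) ℙ = gaussianReal 0 σ2 := by
    intro i j
    have hcomp : (fun x : ℝ => x + (-θ i)) ∘ (X i j) = Z i j := by
      funext ω
      simp [hZ, sub_eq_add_neg]
    have h1 : Measure.map (Z i j) ℙ
        = Measure.map (fun x : ℝ => x + (-θ i)) (Measure.map (X i j) ℙ) := by
      rw [Measure.map_map (measurable_add_const _) (hmeas i j), hcomp]
    rw [h1, hdist i j, gaussianReal_map_add_const (-θ i)]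
    simp
  have hYmeas : ∀ i, Measurable (Y i) := by
    intro i
    apply Finset.measurable_sum
    intro j _
    apply Measurable.pow_const
    exact (hmeas i j).sub ((Finset.measurable_sum _ fun j' _ => hmeas i j').div_const _)
  -- rows as random vectors
  set W : ℕ → Ω → (Fin k → ℝ) := fun i ω j => Z i j ω with hW
  have hWmeas : ∀ i, Measurable (W i) := fun i => measurable_pi_lambda _ (fun j => hZmeas i j)
  have hrowind : ∀ i, iIndepFun (m := fun _ : Fin k => (inferInstance : MeasurableSpace ℝ))
      (fun j => Z i j) ℙ := by
    intro i
    have hinj : Function.Injective (fun j : Fin k => ((i, j) : ℕ × Fin k)) := by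
      intro a b hab
      simpa using congrArg Prod.snd hab
    have h1 := my_iIndepFun_comp_inj hindep hinj
    exact h1.comp (fun j (x : ℝ) => x - θ i) (fun j => measurable_sub_const _)
  have hWlaw : ∀ i, Measure.map (W i) ℙ
      = Measure.pi (fun _ : Fin k => gaussianReal 0 σ2) := by
    intro i
    rw [my_map_pi (fun j => Z i j) (hZmeas i) (hrowind i)]
    congr 1
    funext j
    exact hZdist i j
  set g : (Fin k → ℝ) → ℝ := fun u => ∑ j, (u j - (∑ j', u j') / k) ^ 2 with hg
  have hgmeas : Measurable g := by
    apply Finset.measurable_sum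
    intro j _
    apply Measurable.pow_const
    exact (measurable_pi_apply j).sub
      ((Finset.measurable_sum _ fun j' _ => measurable_pi_apply j').div_const _)
  have hYeq : ∀ i, Y i = g ∘ W i := by
    intro i
    funext ω
    simp only [hY, hg, hW, hZ, Function.comp_apply]
    refine Finset.sum_congr rfl fun j _ => ?_
    congr 1
    rw [Finset.sum_sub_distrib, Finset.sum_const, Finset.card_univ, Fintype.card_fin,
      nsmul_eq_mul, sub_div, mul_div_cancel_left₀ (θ i) hkne]
    ring
  -- identical distribution
  have hident : ∀ i, IdentDistrib (Y i) (Y 0) ℙ ℙ := by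
    intro i
    have hWid : IdentDistrib (W i) (W 0) ℙ ℙ :=
      ⟨(hWmeas i).aemeasurable, (hWmeas 0).aemeasurable, by rw [hWlaw i, hWlaw 0]⟩
    have := hWid.comp hgmeas
    rw [hYeq i, hYeq 0]
    exact this
  -- pairwise independence
  have hpair : Pairwise (Function.onFun (IndepFun · · ℙ) Y) := by
    intro i l hil
    have hdisj : Disjoint ({i} ×ˢ (Finset.univ : Finset (Fin k)))
        ({l} ×ˢ (Finset.univ : Finset (Fin k))) := by
      rw [Finset.disjoint_left]
      rintro ⟨a, b⟩ ha hb
      simp only [Finset.mem_product, Finset.mem_singleton] at ha hb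
      exact hil (ha.1 ▸ hb.1 ▸ rfl)
    have hbase := hindep.indepFun_finset _ _ hdisj (fun p => hmeas p.1 p.2)
    have hmemS : ∀ j : Fin k, ((i, j) : ℕ × Fin k) ∈ ({i} ×ˢ (Finset.univ : Finset (Fin k))) := by
      intro j; simp [Finset.mem_product]
    have hmemT : ∀ j : Fin k, ((l, j) : ℕ × Fin k) ∈ ({l} ×ˢ (Finset.univ : Finset (Fin k))) := by
      intro j; simp [Finset.mem_product]
    set φS : ({p // p ∈ ({i} ×ˢ (Finset.univ : Finset (Fin k)))} → ℝ) → ℝ :=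
      fun u => ∑ j : Fin k, (u ⟨(i, j), hmemS j⟩ - (∑ j' : Fin k, u ⟨(i, j'), hmemS j'⟩) / k) ^ 2
      with hφS
    set φT : ({p // p ∈ ({l} ×ˢ (Finset.univ : Finset (Fin k)))} → ℝ) → ℝ :=
      fun u => ∑ j : Fin k, (u ⟨(l, j), hmemT j⟩ - (∑ j' : Fin k, u ⟨(l, j'), hmemT j'⟩) / k) ^ 2
      with hφT
    have hφSm : Measurable φS := by
      refine Finset.measurable_sum _ fun j _ => Measurable.pow_const ?_ 2
      exact Measurable.sub (measurable_pi_apply (⟨(i, j), hmemS j⟩ :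
          {p // p ∈ ({i} ×ˢ (Finset.univ : Finset (Fin k)))}))
        (Measurable.div_const (Finset.measurable_sum Finset.univ
          (fun j' _ => measurable_pi_apply (⟨(i, j'), hmemS j'⟩ :
          {p // p ∈ ({i} ×ˢ (Finset.univ : Finset (Fin k)))}))) _)
    have hφTm : Measurable φT := by
      refine Finset.measurable_sum _ fun j _ => Measurable.pow_const ?_ 2
      exact Measurable.sub (measurable_pi_apply (⟨(l, j), hmemT j⟩ :
          {p // p ∈ ({l} ×ˢ (Finset.univ : Finset (Fin k)))}))
        (Measurable.div_const (Finset.measurable_sum Finset.univ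
          (fun j' _ => measurable_pi_apply (⟨(l, j'), hmemT j'⟩ :
          {p // p ∈ ({l} ×ˢ (Finset.univ : Finset (Fin k)))}))) _)
    have := hbase.comp hφSm hφTm
    exact this
  -- integrability
  have hZsq_int : ∀ i j, Integrable (fun ω => (Z i j ω) ^ 2) ℙ := by
    intro i j
    have h1 := my_gauss_integrable_sq σ2 hσR
    rw [← hZdist i j] at h1
    exact (integrable_map_measure
      ((measurable_id.pow_const 2).aestronglyMeasurable)
      (hZmeas i j).aemeasurable).mp h1
  have hmul_int : ∀ i j l, Integrable (fun ω => Z i j ω * Z i l ω) ℙ := by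
    intro i j l
    refine Integrable.mono' (((hZsq_int i j).add (hZsq_int i l)).div_const 2)
      ((hZmeas i j).mul (hZmeas i l)).aestronglyMeasurable ?_
    filter_upwards with ω
    have habs : ∀ a b : ℝ, |a| * |b| ≤ (a ^ 2 + b ^ 2) / 2 := fun a b => by
      nlinarith [sq_nonneg (|a| - |b|), sq_abs a, sq_abs b, abs_nonneg a, abs_nonneg b]
    show ‖Z i j ω * Z i l ω‖ ≤ ((Z i j ω) ^ 2 + (Z i l ω) ^ 2) / 2
    rw [Real.norm_eq_abs, abs_mul]
    exact habs _ _
  have key : ∀ u : Fin k → ℝ, ∑ j, (u j - (∑ j', u j') / k) ^ 2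
      = (∑ j, u j ^ 2) - (∑ j, ∑ l, u j * u l) / k := by
    intro u
    have hsq : ∑ j, ∑ l, u j * u l = (∑ j, u j) ^ 2 := by rw [sq, Finset.sum_mul_sum]
    rw [hsq]
    have expand : ∀ j : Fin k, (u j - (∑ j', u j') / k) ^ 2
        = u j ^ 2 - 2 * ((∑ j', u j') / k) * u j + ((∑ j', u j') / k) ^ 2 := fun j => by ring
    rw [Finset.sum_congr rfl fun j _ => expand j, Finset.sum_add_distrib,
      Finset.sum_sub_distrib, ← Finset.mul_sum, Finset.sum_const, Finset.card_univ,
      Fintype.card_fin, nsmul_eq_mul]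
    have hkne2 : (k:ℝ) ≠ 0 := hkne
    field_simp
    ring
  have hY0expand : Y 0 = fun ω =>
      (∑ j, (Z 0 j ω) ^ 2) - (∑ j, ∑ l, Z 0 j ω * Z 0 l ω) / k := by
    rw [hYeq 0]
    funext ω
    exact key (W 0 ω)
  have hYint : Integrable (Y 0) ℙ := by
    rw [hY0expand]
    exact ((integrable_finset_sum _ fun j _ => hZsq_int 0 j).sub
      ((integrable_finset_sum _ fun j _ => integrable_finset_sum _ fun l _ => hmul_int 0 j l).div_const _))
  -- expectation
  have hZmean : ∀ j, ∫ ω, Z 0 j ω ∂ℙ = 0 := by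
    intro j
    have h1 : ∫ ω, Z 0 j ω ∂ℙ = ∫ x, x ∂(Measure.map (Z 0 j) ℙ) :=
      (integral_map (hZmeas 0 j).aemeasurable aestronglyMeasurable_id).symm
    rw [h1, hZdist 0 j, my_gauss_mean σ2 hσR]
  have hZsqmean : ∀ j, ∫ ω, (Z 0 j ω) ^ 2 ∂ℙ = σ2 := by
    intro j
    have h1 : ∫ ω, (Z 0 j ω) ^ 2 ∂ℙ = ∫ x, x ^ 2 ∂(Measure.map (Z 0 j) ℙ) :=
      (integral_map (hZmeas 0 j).aemeasurable
        ((measurable_id.pow_const 2).aestronglyMeasurable)).symm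
    rw [h1, hZdist 0 j, my_gauss_sq σ2 hσR]
  have hcross : ∀ j l : Fin k, j ≠ l → ∫ ω, Z 0 j ω * Z 0 l ω ∂ℙ = 0 := by
    intro j l hjl
    have hne : ((0, j) : ℕ × Fin k) ≠ (0, l) := by
      intro hcon
      exact hjl (by simpa using congrArg Prod.snd hcon)
    have hXind := hindep.indepFun hne
    have hind2 : IndepFun (Z 0 j) (Z 0 l) ℙ :=
      hXind.comp (measurable_sub_const (θ 0)) (measurable_sub_const (θ 0))
    have := hind2.integral_mul_eq_mul_integral (hZmeas 0 j).aestronglyMeasurable (hZmeas 0 l).aestronglyMeasurable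
    have heq : ∫ ω, Z 0 j ω * Z 0 l ω ∂ℙ = ∫ ω, (Z 0 j * Z 0 l) ω ∂ℙ := rfl
    rw [heq, this, hZmean j, hZmean l, mul_zero]
  have hEY : ∫ ω, Y 0 ω ∂ℙ = (k : ℝ) * σ2 - σ2 := by
    rw [hY0expand]
    rw [integral_sub (integrable_finset_sum _ fun j _ => hZsq_int 0 j)
      ((integrable_finset_sum _ fun j _ => integrable_finset_sum _ fun l _ => hmul_int 0 j l).div_const _)]
    rw [integral_div, integral_finset_sum _ fun j _ => hZsq_int 0 j,
      integral_finset_sum _ fun j _ => integrable_finset_sum _ fun l _ => hmul_int 0 j l]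
    have h1 : ∀ j : Fin k, ∫ ω, ∑ l, Z 0 j ω * Z 0 l ω ∂ℙ = (σ2 : ℝ) := by
      intro j
      rw [integral_finset_sum _ fun l _ => hmul_int 0 j l]
      rw [Finset.sum_eq_single j]
      · rw [show (fun ω => Z 0 j ω * Z 0 j ω) = fun ω => (Z 0 j ω) ^ 2 by funext ω; ring]
        exact hZsqmean j
      · intro l _ hlj
        exact hcross j l (Ne.symm hlj)
      · intro h; exact absurd (Finset.mem_univ j) h
    rw [Finset.sum_congr rfl fun j _ => h1 j, Finset.sum_congr rfl fun j _ => hZsqmean j]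
    rw [Finset.sum_const, Finset.card_univ, Fintype.card_fin, nsmul_eq_mul]
    field_simp
  -- strong law
  have hae := strong_law_ae_real Y hYint hpair hident
  rw [hEY] at hae
  have hconv : ∀ᵐ ω ∂ℙ, Tendsto
      (fun n : ℕ => (∑ i ∈ Finset.range n, Y i ω) / ((n : ℝ) * k - 2)) atTop
      (nhds (((k : ℝ) - 1) / k * σ2)) := by
    filter_upwards [hae] with ω hω
    have hfac : Tendsto (fun n : ℕ => (n : ℝ) / ((n : ℝ) * k - 2)) atTop (nhds (1 / (k : ℝ))) := by
      have h2 : Tendsto (fun n : ℕ => (k : ℝ) - 2 / (n : ℝ)) atTop (nhds ((k : ℝ) - 0)) :=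
        tendsto_const_nhds.sub (tendsto_const_div_atTop_nhds_zero_nat 2)
      have h3 := (tendsto_const_nhds (x := (1 : ℝ)) (f := atTop)).div h2
        (by rw [sub_zero]; exact hkne)
      rw [sub_zero] at h3
      refine h3.congr' ?_
      filter_upwards [eventually_ge_atTop 1] with n hn
      have hn0 : (n : ℝ) ≠ 0 := by positivity
      show (1 : ℝ) / ((k : ℝ) - 2 / (n : ℝ)) = (n : ℝ) / ((n : ℝ) * k - 2)
      rw [show (k : ℝ) - 2 / (n : ℝ) = ((n : ℝ) * k - 2) / n by field_simp, one_div_div]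
    have hmul := hω.mul hfac
    have hval : ((k : ℝ) * σ2 - σ2) * (1 / k) = ((k : ℝ) - 1) / k * σ2 := by
      field_simp
    rw [hval] at hmul
    refine hmul.congr' ?_
    filter_upwards [eventually_ge_atTop 1] with n hn
    have hn0 : (n : ℝ) ≠ 0 := by positivity
    rw [div_mul_div_comm, mul_comm (∑ i ∈ Finset.range n, Y i ω) ((n : ℝ)),
      mul_div_mul_left _ _ hn0]
  exact tendstoInMeasure_of_tendsto_ae
    (fun n => ((Finset.measurable_sum _ fun i _ => hYmeas i).div_const _).aestronglyMeasurable)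
    hconv

/-- **Jeffreys' prior fails in the Neyman–Scott problem.**
In the Neyman–Scott model `X i j ~ N(θ i, σ²)`, `i < n`, `j < k`, with Jeffreys'
prior `π_J(θ₁,…,θ_n, σ²) ∝ (σ²)^{-n/2-1}`, the marginal posterior of `v = σ²`
(obtained by integrating the likelihood times the prior over `(θ₁,…,θ_n) ∈ ℝⁿ`)
is proportional to `v^{-nk/2-1} exp(-n(k-1)S/(2v))`, where
`n(k-1)S = ∑ᵢ∑ⱼ(x i j - x̄ i)²`; its mean `n(k-1)S/(nk-2)` converges in
probability to `(k-1)σ²/k ≠ σ²`, so the posterior mean is inconsistent. -/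
theorem neyman_scott_jeffreys_inconsistent
    {Ω : Type*} [MeasureSpace Ω] [IsProbabilityMeasure (ℙ : Measure Ω)]
    (k : ℕ) (hk : 2 ≤ k) (θ : ℕ → ℝ) (σ2 : NNReal) (hσ2 : 0 < σ2)
    (X : ℕ → Fin k → Ω → ℝ)
    (hmeas : ∀ i j, Measurable (X i j))
    (hindep : iIndepFun (m := fun _ : ℕ × Fin k => (inferInstance : MeasurableSpace ℝ))
      (fun p ω => X p.1 p.2 ω) ℙ)
    (hdist : ∀ i j, Measure.map (X i j) ℙ = gaussianReal (θ i) σ2) :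
    -- shape of the marginal posterior of σ² under Jeffreys' prior
    (∀ n : ℕ, 0 < n → ∃ c : ℝ, 0 < c ∧
      ∀ (x : Fin n → Fin k → ℝ) (v : ℝ), 0 < v →
        (∫ t : Fin n → ℝ, ∏ i, ∏ j,
            (2 * π * v) ^ (-(1 / 2 : ℝ)) * Real.exp (-(x i j - t i) ^ 2 / (2 * v)))
          * v ^ (-((n : ℝ) / 2) - 1)
        = c * v ^ (-((n : ℝ) * k / 2) - 1) *
            Real.exp (-(∑ i, ∑ j, (x i j - (∑ j' : Fin k, x i j') / k) ^ 2) / (2 * v))) ∧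
    -- the posterior mean n(k-1)S/(nk-2) is inconsistent for σ²
    TendstoInMeasure ℙ
      (fun n ω =>
        (∑ i ∈ Finset.range n, ∑ j : Fin k,
            (X i j ω - (∑ j' : Fin k, X i j' ω) / k) ^ 2) / (n * k - 2))
      atTop (fun _ => ((k : ℝ) - 1) / k * σ2) ∧
    ((k : ℝ) - 1) / k * σ2 ≠ (σ2 : ℝ) := by
  have hk0 : 0 < k := by omega
  have hkR : (0:ℝ) < k := by exact_mod_cast hk0
  have hσR : (0:ℝ) < σ2 := hσ2
  refine ⟨fun n hn => my_part1 k n hk0 hn, my_part2 k hk θ σ2 hσ2 X hmeas hindep hdist, ?_⟩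
  have h1 : ((k : ℝ) - 1) / k < 1 := (div_lt_one hkR).mpr (by linarith)
  have h2 := mul_lt_mul_of_pos_right h1 hσR
  rw [one_mul] at h2
  exact ne_of_lt h2
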